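/- Let ρ_1, ρ_2 : (ℂ^n)^{⊕m} → (ℂ^n)^{⊕n} be two surjective linear maps given by n×m scalar matrices A and B (acting block-wise on the vector variables). Then ρ_1^{-1}(D_n) = ρ_2^{-1}(D_n), where D_n is the variety of singular n×n matrices, if and only if A and B have the same kernel (equivalently B = CA with C ∈ GL_n(ℂ)). -/

import Mathlib

open Matrix

private lemma key_eq {n m : ℕ} (A : Matrix (Fin n) (Fin m) ℂ) (v : Fin m → Fin n → ℂ) :
    (Matrix.of fun i j => ∑ l, A i l * v l j) = A * Matrix.of v := by
  ext i j; simp [Matrix.mul_apply]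

private lemma surj_mulVecLin {n m : ℕ} {A : Matrix (Fin n) (Fin m) ℂ}
    (hA : Function.Surjective (fun v : Fin m → Fin n → ℂ =>
      (Matrix.of fun i j => ∑ l, A i l * v l j : Matrix (Fin n) (Fin n) ℂ))) :
    Function.Surjective A.mulVecLin := by
  intro y
  rcases Nat.eq_zero_or_pos n with h | h
  · subst h; exact ⟨0, Subsingleton.elim _ _⟩
  · obtain ⟨v, hv⟩ := hA (Matrix.of fun i _ => y i)
    refine ⟨fun l => v l ⟨0, h⟩, funext fun i => ?_⟩
    have := congrFun (congrFun hv i) ⟨0, h⟩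
    simpa [Matrix.mulVecLin_apply, Matrix.mulVec, dotProduct] using this

private lemma det_zero_iff {n m : ℕ} (A : Matrix (Fin n) (Fin m) ℂ)
    (w : Matrix (Fin m) (Fin n) ℂ) :
    (A * w).det = 0 ↔ ∃ c, c ≠ 0 ∧ w *ᵥ c ∈ LinearMap.ker A.mulVecLin := by
  rw [← Matrix.exists_mulVec_eq_zero_iff]
  constructor
  · rintro ⟨c, hc, h⟩
    exact ⟨c, hc, by simpa [Matrix.mulVecLin_apply, ← Matrix.mulVec_mulVec] using h⟩
  · rintro ⟨c, hc, h⟩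
    refine ⟨c, hc, ?_⟩
    simpa [Matrix.mulVecLin_apply, ← Matrix.mulVec_mulVec] using h

private lemma ker_le_of_subset {n m : ℕ} {A B : Matrix (Fin n) (Fin m) ℂ}
    (hB : Function.Surjective (fun v : Fin m → Fin n → ℂ =>
      (Matrix.of fun i j => ∑ l, B i l * v l j : Matrix (Fin n) (Fin n) ℂ)))
    (hsub : {v : Fin m → Fin n → ℂ | (Matrix.of fun i j => ∑ l, A i l * v l j).det = 0} ⊆
      {v : Fin m → Fin n → ℂ | (Matrix.of fun i j => ∑ l, B i l * v l j).det = 0}) :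
    LinearMap.ker A.mulVecLin ≤ LinearMap.ker B.mulVecLin := by
  intro x hx
  rw [LinearMap.mem_ker, Matrix.mulVecLin_apply] at hx ⊢
  by_contra hBx
  obtain ⟨i0, hi0⟩ := Function.ne_iff.mp hBx
  obtain ⟨u, hu⟩ := hB 1
  dsimp only at hu
  rw [key_eq] at hu
  set w : Matrix (Fin m) (Fin n) ℂ := (Matrix.of u).updateCol i0 x with hw
  have hBw : B * w = (1 : Matrix (Fin n) (Fin n) ℂ).updateCol i0 (B *ᵥ x) := by
    ext i j
    rcases eq_or_ne j i0 with rfl | hj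
    · simp [hw, Matrix.mul_apply, Matrix.updateCol_apply, Matrix.mulVec, dotProduct]
    · have := congrFun (congrFun hu i) j
      simp only [Matrix.mul_apply] at this
      simp only [hw, Matrix.mul_apply, Matrix.updateCol_apply, if_neg hj]
      exact this
  have hAw : (A * w).det = 0 := by
    apply Matrix.det_eq_zero_of_column_eq_zero i0
    intro i
    have : (A * w) i i0 = (A *ᵥ x) i := by
      simp [hw, Matrix.mul_apply, Matrix.updateCol_apply, Matrix.mulVec, dotProduct]
    rw [this, hx]
    rfl
  have hmem : w ∈ {v : Fin m → Fin n → ℂ |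
      (Matrix.of fun i j => ∑ l, A i l * v l j).det = 0} := by
    show (Matrix.of fun i j => ∑ l, A i l * w l j).det = 0
    exact (congrArg Matrix.det (key_eq A w)).trans hAw
  have hBw0 := hsub hmem
  replace hBw0 := (congrArg Matrix.det (key_eq B w)).symm.trans hBw0
  have : (B * w).det = (B *ᵥ x) i0 := by
    rw [hBw, ← Matrix.cramer_apply, Matrix.cramer_one]
    rfl
  have hBw0' : (B * w).det = 0 := hBw0
  rw [this] at hBw0'
  exact hi0 hBw0'

theorem determinantal_varieties_equal_iff_same_kernel (n m : ℕ)
    (A B : Matrix (Fin n) (Fin m) ℂ)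
    (hA : Function.Surjective
      (fun v : Fin m → Fin n → ℂ => (Matrix.of fun i j => ∑ l, A i l * v l j :
        Matrix (Fin n) (Fin n) ℂ)))
    (hB : Function.Surjective
      (fun v : Fin m → Fin n → ℂ => (Matrix.of fun i j => ∑ l, B i l * v l j :
        Matrix (Fin n) (Fin n) ℂ))) :
    ({v : Fin m → Fin n → ℂ | (Matrix.of fun i j => ∑ l, A i l * v l j).det = 0} =
      {v : Fin m → Fin n → ℂ | (Matrix.of fun i j => ∑ l, B i l * v l j).det = 0}) ↔
    LinearMap.ker A.mulVecLin = LinearMap.ker B.mulVecLin := by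
  constructor
  · intro hset
    exact le_antisymm (ker_le_of_subset hB hset.subset) (ker_le_of_subset hA hset.symm.subset)
  · intro hker
    ext v
    simp only [Set.mem_setOf_eq]
    rw [key_eq, key_eq, det_zero_iff, det_zero_iff, hker]
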